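/- Let V and W be finite-dimensional vector spaces over the field 𝔽₂ with two elements, and let σ : V → V and τ : W → W be linear involutions (σ² = id, τ² = id). For a linear involution ρ of a finite-dimensional 𝔽₂-vector space, set t(ρ) = finrank(ker(id + ρ)) − finrank(range(id + ρ)). Then for the involution σ ⊗ τ of V ⊗ W one has t(σ ⊗ τ) = t(σ) · t(τ). -/

import Mathlib

open TensorProduct

noncomputable section

/-- The number of trivial summands of a linear involution `ρ` of an `𝔽₂`-vector
space: `t(ρ) = dim ker(id + ρ) - dim range(id + ρ)`. -/
def trivCount {V : Type} [AddCommGroup V] [Module (ZMod 2) V]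
    (ρ : V →ₗ[ZMod 2] V) : ℕ :=
  Module.finrank (ZMod 2) (LinearMap.ker (LinearMap.id + ρ)) -
    Module.finrank (ZMod 2) (LinearMap.range (LinearMap.id + ρ))

section Aux

open LinearMap

variable {V W V' Z : Type} [AddCommGroup V] [Module (ZMod 2) V]
  [AddCommGroup W] [Module (ZMod 2) W] [AddCommGroup V'] [Module (ZMod 2) V']
  [AddCommGroup Z] [Module (ZMod 2) Z]

lemma add_self2 (u : V) : u + u = 0 := by
  have h2 : (2 : ZMod 2) = 0 := rfl
  calc u + u = (2 : ZMod 2) • u := by rw [two_smul]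
  _ = 0 := by rw [h2, zero_smul]

@[simp] lemma two_nsmul_zero2 (u : V) : (2 : ℕ) • u = 0 := by
  rw [two_smul]; exact add_self2 u

@[simp] lemma two_zsmul_zero2 (u : V) : (2 : ℤ) • u = 0 := by
  rw [two_smul]; exact add_self2 u

lemma eq_of_add_eq_zero2 {u w : V} (h : u + w = 0) : u = w := by
  have h' : u + (w + w) = (u + w) + w := by abel
  rw [add_self2, h, zero_add, add_zero] at h'
  exact h'

lemma trivCount_eq [FiniteDimensional (ZMod 2) V] (ρ : V →ₗ[ZMod 2] V) :
    trivCount ρ = 2 * Module.finrank (ZMod 2) (LinearMap.ker (LinearMap.id + ρ))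
      - Module.finrank (ZMod 2) V := by
  have h := LinearMap.finrank_range_add_finrank_ker (LinearMap.id + ρ)
  unfold trivCount
  omega

lemma Nl_comp_self (ρ : V →ₗ[ZMod 2] V) (hρ : ρ ∘ₗ ρ = LinearMap.id) :
    (LinearMap.id + ρ) ∘ₗ (LinearMap.id + ρ) = 0 := by
  ext x
  have hx : ρ (ρ x) = x := DFunLike.congr_fun hρ x
  simp only [comp_apply, LinearMap.add_apply, id_apply, map_add, LinearMap.zero_apply, hx]
  have : x + ρ x + (ρ x + x) = (x + x) + (ρ x + ρ x) := by abel
  rw [this, add_self2, add_self2, add_zero]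

lemma le_two_ker [FiniteDimensional (ZMod 2) V] (ρ : V →ₗ[ZMod 2] V)
    (hρ : ρ ∘ₗ ρ = LinearMap.id) :
    Module.finrank (ZMod 2) V
      ≤ 2 * Module.finrank (ZMod 2) (LinearMap.ker (LinearMap.id + ρ)) := by
  have hle : LinearMap.range (LinearMap.id + ρ) ≤ LinearMap.ker (LinearMap.id + ρ) :=
    LinearMap.range_le_ker_iff.mpr (Nl_comp_self ρ hρ)
  have h1 := Submodule.finrank_mono hle
  have h2 := LinearMap.finrank_range_add_finrank_ker (LinearMap.id + ρ)
  omega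

lemma trivCount_conj [FiniteDimensional (ZMod 2) V] [FiniteDimensional (ZMod 2) V']
    (e : V ≃ₗ[ZMod 2] V') (ρ : V →ₗ[ZMod 2] V) (ρ' : V' →ₗ[ZMod 2] V')
    (h : ∀ v, e (ρ v) = ρ' (e v)) : trivCount ρ = trivCount ρ' := by
  rw [trivCount_eq, trivCount_eq]
  have hdim : Module.finrank (ZMod 2) V = Module.finrank (ZMod 2) V' := e.finrank_eq
  have hker : LinearMap.ker (LinearMap.id + ρ') =
      (LinearMap.ker (LinearMap.id + ρ)).map (e : V →ₗ[ZMod 2] V') := by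
    ext y
    constructor
    · intro hy
      refine ⟨e.symm y, ?_, e.apply_symm_apply y⟩
      have hy' : y + ρ' y = 0 := by simpa using hy
      have h1 : e (e.symm y + ρ (e.symm y)) = 0 := by
        rw [map_add, h, e.apply_symm_apply, hy']
      have h0 : e (e.symm y + ρ (e.symm y)) = e 0 := by rw [map_zero]; exact h1
      have := e.injective h0
      simpa using this
    · rintro ⟨x, hx, rfl⟩
      have hx' : x + ρ x = 0 := by simpa using hx
      have : e x + ρ' (e x) = 0 := by rw [← h, ← map_add, hx', map_zero]
      simpa using this
  rw [hker, LinearEquiv.finrank_map_eq, hdim]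

lemma prodSubmodule_finrank [FiniteDimensional (ZMod 2) V] [FiniteDimensional (ZMod 2) W]
    (p : Submodule (ZMod 2) V) (q : Submodule (ZMod 2) W) :
    Module.finrank (ZMod 2) (p.prod q)
      = Module.finrank (ZMod 2) p + Module.finrank (ZMod 2) q := by
  have e : ↥(p.prod q) ≃ₗ[ZMod 2] ↥p × ↥q :=
    { toFun := fun x => (⟨x.1.1, x.2.1⟩, ⟨x.1.2, x.2.2⟩)
      map_add' := fun _ _ => rfl
      map_smul' := fun _ _ => rfl
      invFun := fun y => ⟨(y.1.1, y.2.1), ⟨y.1.2, y.2.2⟩⟩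
      left_inv := fun _ => rfl
      right_inv := fun _ => rfl }
  rw [e.finrank_eq, Module.finrank_prod]

lemma trivCount_prodMap [FiniteDimensional (ZMod 2) V] [FiniteDimensional (ZMod 2) W]
    (ρ₁ : V →ₗ[ZMod 2] V) (ρ₂ : W →ₗ[ZMod 2] W)
    (h₁ : ρ₁ ∘ₗ ρ₁ = LinearMap.id) (h₂ : ρ₂ ∘ₗ ρ₂ = LinearMap.id) :
    trivCount (ρ₁.prodMap ρ₂) = trivCount ρ₁ + trivCount ρ₂ := by
  have hN : LinearMap.id + ρ₁.prodMap ρ₂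
      = (LinearMap.id + ρ₁).prodMap (LinearMap.id + ρ₂) := by
    ext x <;> rfl
  rw [trivCount_eq, trivCount_eq, trivCount_eq, hN, LinearMap.ker_prodMap,
    prodSubmodule_finrank, Module.finrank_prod]
  have k₁ := le_two_ker ρ₁ h₁
  have k₂ := le_two_ker ρ₂ h₂
  omega

lemma trivCount_id' [FiniteDimensional (ZMod 2) V] :
    trivCount (LinearMap.id : V →ₗ[ZMod 2] V) = Module.finrank (ZMod 2) V := by
  have h0 : (LinearMap.id + LinearMap.id : V →ₗ[ZMod 2] V) = 0 := by
    ext x; exact add_self2 x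
  rw [trivCount_eq, h0, LinearMap.ker_zero, finrank_top]
  omega

/-- the "doubled" involution `(x, y) ↦ (θ x, θ x + θ y)`. -/
def Kmap (θ : Z →ₗ[ZMod 2] Z) : Z × Z →ₗ[ZMod 2] Z × Z :=
  (θ ∘ₗ LinearMap.fst (ZMod 2) Z Z).prod
    (θ ∘ₗ LinearMap.fst (ZMod 2) Z Z + θ ∘ₗ LinearMap.snd (ZMod 2) Z Z)

@[simp] lemma Kmap_apply (θ : Z →ₗ[ZMod 2] Z) (x : Z × Z) :
    Kmap θ x = (θ x.1, θ x.1 + θ x.2) := rfl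

lemma Kmap_invol (θ : Z →ₗ[ZMod 2] Z) (hθ : θ ∘ₗ θ = LinearMap.id) :
    Kmap θ ∘ₗ Kmap θ = LinearMap.id := by
  have hh : ∀ z : Z, θ (θ z) = z := fun z => DFunLike.congr_fun hθ z
  apply LinearMap.ext
  intro x
  simp only [comp_apply, Kmap_apply, map_add, id_apply, hh]
  have h2 : x.1 + (x.1 + x.2) = x.2 := by rw [← add_assoc, add_self2, zero_add]
  rw [h2]

lemma finrank_ker_NlKmap [FiniteDimensional (ZMod 2) Z] (θ : Z →ₗ[ZMod 2] Z)
    (hθ : θ ∘ₗ θ = LinearMap.id) :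
    Module.finrank (ZMod 2) (LinearMap.ker (LinearMap.id + Kmap θ))
      = Module.finrank (ZMod 2) Z := by
  have hh : ∀ z : Z, θ (θ z) = z := fun z => DFunLike.congr_fun hθ z
  have hker : LinearMap.ker (LinearMap.id + Kmap θ)
      = LinearMap.range ((LinearMap.id + θ).prod (LinearMap.id : Z →ₗ[ZMod 2] Z)) := by
    ext x
    obtain ⟨a, b⟩ := x
    simp only [mem_ker, mem_range, LinearMap.add_apply, id_apply, Kmap_apply, prod_apply, Function.prod,
      Prod.ext_iff, Prod.fst_add, Prod.snd_add, Prod.fst_zero, Prod.snd_zero]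
    constructor
    · rintro ⟨h1, h2⟩
      refine ⟨b, ?_, rfl⟩
      have hfix : a = θ a := eq_of_add_eq_zero2 h1
      rw [← hfix] at h2
      have h3 : a + (b + θ b) = 0 := by rw [← h2]; abel
      exact (eq_of_add_eq_zero2 h3).symm
    · rintro ⟨y, rfl, rfl⟩
      constructor <;>
      · simp only [map_add, hh]
        abel_nf
        simp
  have hinj : Function.Injective ((LinearMap.id + θ).prod (LinearMap.id : Z →ₗ[ZMod 2] Z)) := by
    intro a b hab
    simpa using congrArg Prod.snd hab
  rw [hker, LinearMap.finrank_range_of_inj hinj]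

lemma trivCount_Kmap [FiniteDimensional (ZMod 2) Z] (θ : Z →ₗ[ZMod 2] Z)
    (hθ : θ ∘ₗ θ = LinearMap.id) : trivCount (Kmap θ) = 0 := by
  rw [trivCount_eq, finrank_ker_NlKmap θ hθ, Module.finrank_prod]
  omega

lemma finrank_ker_lTensor [FiniteDimensional (ZMod 2) V] [FiniteDimensional (ZMod 2) W]
    [FiniteDimensional (ZMod 2) Z] (g : W →ₗ[ZMod 2] Z) :
    Module.finrank (ZMod 2) (LinearMap.ker (lTensor V g))
      = Module.finrank (ZMod 2) V * Module.finrank (ZMod 2) (LinearMap.ker g) := by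
  have hexact : Function.Exact (lTensor V (LinearMap.ker g).subtype) (lTensor V g) :=
    Module.Flat.lTensor_exact V (LinearMap.exact_subtype_ker_map g)
  have hker : LinearMap.ker (lTensor V g)
      = LinearMap.range (lTensor V (LinearMap.ker g).subtype) :=
    hexact.linearMap_ker_eq
  have hinj : Function.Injective (lTensor V (LinearMap.ker g).subtype) :=
    Module.Flat.lTensor_preserves_injective_linearMap _ (Submodule.injective_subtype _)
  rw [hker, LinearMap.finrank_range_of_inj hinj, Module.finrank_tensorProduct]

lemma trivCount_lTensor [FiniteDimensional (ZMod 2) V] [FiniteDimensional (ZMod 2) W]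
    (τ : W →ₗ[ZMod 2] W) (hτ : τ ∘ₗ τ = LinearMap.id) :
    trivCount (lTensor V τ) = Module.finrank (ZMod 2) V * trivCount τ := by
  have hN : (LinearMap.id : V ⊗[ZMod 2] W →ₗ[ZMod 2] V ⊗[ZMod 2] W) + lTensor V τ
      = lTensor V (LinearMap.id + τ) := by
    rw [lTensor_add, lTensor_id]
  rw [trivCount_eq, trivCount_eq, hN, finrank_ker_lTensor, Module.finrank_tensorProduct]
  obtain ⟨m, hm⟩ := Nat.le.dest (le_two_ker τ hτ)
  rw [show 2 * Module.finrank (ZMod 2) (LinearMap.ker (LinearMap.id + τ))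
      - Module.finrank (ZMod 2) W = m by omega]
  have h2 : 2 * (Module.finrank (ZMod 2) V
        * Module.finrank (ZMod 2) (LinearMap.ker (LinearMap.id + τ)))
      = Module.finrank (ZMod 2) V * Module.finrank (ZMod 2) W
        + Module.finrank (ZMod 2) V * m := by
    rw [show 2 * (Module.finrank (ZMod 2) V
        * Module.finrank (ZMod 2) (LinearMap.ker (LinearMap.id + τ)))
      = Module.finrank (ZMod 2) V
        * (2 * Module.finrank (ZMod 2) (LinearMap.ker (LinearMap.id + τ))) by ring,
      ← hm, mul_add]
  rw [h2, Nat.add_sub_cancel_left]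

/-- Structure theorem for involutions over 𝔽₂. -/
lemma exists_decomp [FiniteDimensional (ZMod 2) V] (σ : V →ₗ[ZMod 2] V)
    (hσ : σ ∘ₗ σ = LinearMap.id) :
    ∃ (T C : Submodule (ZMod 2) V) (e : V ≃ₗ[ZMod 2] (↥T × (↥C × ↥C))),
      ∀ v, e (σ v) =
        ((LinearMap.id : ↥T →ₗ[ZMod 2] ↥T).prodMap
          (Kmap (LinearMap.id : ↥C →ₗ[ZMod 2] ↥C))) (e v) := by
  classical
  set A : V →ₗ[ZMod 2] V := LinearMap.id + σ with hAdef
  have hA : ∀ v, A v = v + σ v := fun v => rfl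
  have hσv : ∀ v, σ (σ v) = v := fun v => DFunLike.congr_fun hσ v
  have hAA : ∀ v, A (A v) = 0 := by
    intro v
    rw [hA (A v), hA v, map_add, hσv]
    have : v + σ v + (σ v + v) = (v + v) + (σ v + σ v) := by abel
    rw [this, add_self2, add_self2, add_zero]
  have hσA : ∀ v, σ v = v + A v := by
    intro v
    rw [hA, ← add_assoc, add_self2, zero_add]
  obtain ⟨C, hC⟩ := Submodule.exists_isCompl (LinearMap.ker A)
  set R' : Submodule (ZMod 2) ↥(LinearMap.ker A) :=
    (LinearMap.range A).comap (LinearMap.ker A).subtype with hR'def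
  obtain ⟨T', hT'⟩ := Submodule.exists_isCompl R'
  set T : Submodule (ZMod 2) V := T'.map (LinearMap.ker A).subtype with hTdef
  have hTK : ∀ x ∈ T, x ∈ LinearMap.ker A := by
    rintro x ⟨y, hy, rfl⟩
    exact y.2
  set Φ : (↥T × (↥C × ↥C)) →ₗ[ZMod 2] V :=
    (T.subtype ∘ₗ LinearMap.fst (ZMod 2) ↥T (↥C × ↥C))
    + (C.subtype ∘ₗ LinearMap.fst (ZMod 2) ↥C ↥C ∘ₗ LinearMap.snd (ZMod 2) ↥T (↥C × ↥C))
    + ((A ∘ₗ C.subtype) ∘ₗ LinearMap.snd (ZMod 2) ↥C ↥C ∘ₗ LinearMap.snd (ZMod 2) ↥T (↥C × ↥C))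
    with hΦdef
  have hΦ : ∀ (t : ↥T) (c d : ↥C), Φ (t, (c, d)) = ↑t + ↑c + A ↑d := fun t c d => rfl
  have hinj : Function.Injective Φ := by
    rw [← LinearMap.ker_eq_bot, eq_bot_iff]
    rintro ⟨t, c, d⟩ hx
    have h0 : (t : V) + ↑c + A ↑d = 0 := hx
    have h1 : A ↑c = 0 := by
      have := congrArg A h0
      rw [map_add, map_add, map_zero] at this
      rw [hAA] at this
      have ht0 : A (t : V) = 0 := hTK t t.2
      rw [ht0, zero_add, add_zero] at this
      exact this
    have hc0 : (c : V) = 0 := by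
      have hcK : (c : V) ∈ LinearMap.ker A ⊓ C := ⟨h1, c.2⟩
      rw [hC.inf_eq_bot] at hcK
      exact hcK
    have hc0' : c = 0 := Subtype.ext hc0
    rw [hc0, add_zero] at h0
    have htd : (t : V) = A ↑d := eq_of_add_eq_zero2 h0
    obtain ⟨t', ht', htt'⟩ := t.2
    have ht'R : t' ∈ R' := by
      show (LinearMap.ker A).subtype t' ∈ LinearMap.range A
      rw [htt', htd]
      exact ⟨↑d, rfl⟩
    have ht'0 : t' = 0 := by
      have : t' ∈ R' ⊓ T' := ⟨ht'R, ht'⟩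
      rw [hT'.inf_eq_bot] at this
      exact this
    have ht0 : t = 0 := by
      apply Subtype.ext
      rw [← htt', ht'0]
      rfl
    have hAd : A ↑d = 0 := by rw [← htd, ht0]; rfl
    have hd0 : d = 0 := by
      apply Subtype.ext
      have : (d : V) ∈ LinearMap.ker A ⊓ C := ⟨hAd, d.2⟩
      rw [hC.inf_eq_bot] at this
      exact this
    simp [ht0, hc0', hd0]
  have hsurj : Function.Surjective Φ := by
    intro v
    have hv : v ∈ LinearMap.ker A ⊔ C := by rw [hC.sup_eq_top]; trivial
    obtain ⟨k, hk, c, hc, rfl⟩ := Submodule.mem_sup.mp hv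
    have hkk : (⟨k, hk⟩ : ↥(LinearMap.ker A)) ∈ R' ⊔ T' := by rw [hT'.sup_eq_top]; trivial
    obtain ⟨r', hr', t', ht', hsum⟩ := Submodule.mem_sup.mp hkk
    obtain ⟨u, hu⟩ := hr'
    have hu' : u ∈ LinearMap.ker A ⊔ C := by rw [hC.sup_eq_top]; trivial
    obtain ⟨k₂, hk₂, d, hd, rfl⟩ := Submodule.mem_sup.mp hu'
    refine ⟨(⟨↑t', ⟨t', ht', rfl⟩⟩, (⟨c, hc⟩, ⟨d, hd⟩)), ?_⟩
    rw [hΦ]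
    have hAd : A d = (r' : V) := by
      have h2 : A (k₂ + d) = A d := by
        rw [map_add, show A k₂ = 0 from hk₂, zero_add]
      rw [← h2]
      exact hu
    have hksum : (r' : V) + ↑t' = k := by
      have := congrArg Subtype.val hsum
      simpa using this
    rw [hAd, ← hksum]
    abel
  set E := LinearEquiv.ofBijective Φ ⟨hinj, hsurj⟩ with hEdef
  refine ⟨T, C, E.symm, ?_⟩
  intro v
  set G := ((LinearMap.id : ↥T →ₗ[ZMod 2] ↥T).prodMap
      (Kmap (LinearMap.id : ↥C →ₗ[ZMod 2] ↥C)))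
  have hcomm : ∀ x, σ (Φ x) = Φ (G x) := by
    rintro ⟨t, c, d⟩
    have hG : G (t, (c, d)) = (t, (c, c + d)) := by
      simp [G, Kmap_apply]
    rw [hG, hΦ, hΦ]
    have hσt : σ ↑t = (t : V) := by
      rw [hσA, hTK t t.2, add_zero]
    have hσc : σ (c : V) = ↑c + A ↑c := hσA _
    have hσAd : σ (A ↑d) = A ↑d := by
      rw [hσA, hAA, add_zero]
    rw [map_add, map_add, hσt, hσc, hσAd]
    rw [Submodule.coe_add, map_add]
    abel
  have hΦE : ∀ w, Φ (E.symm w) = w := fun w => E.apply_symm_apply w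
  have h1 : σ v = Φ (G (E.symm v)) := by
    rw [← hcomm, hΦE]
  rw [h1]
  show E.symm (E (G (E.symm v))) = G (E.symm v)
  rw [E.symm_apply_apply]

-- naturality lemmas
lemma nat_congr [FiniteDimensional (ZMod 2) V] (e : V ≃ₗ[ZMod 2] V')
    (σ : V →ₗ[ZMod 2] V) (σ' : V' →ₗ[ZMod 2] V') (τ : W →ₗ[ZMod 2] W)
    (h : ∀ v, e (σ v) = σ' (e v)) :
    ∀ x : V ⊗[ZMod 2] W,
      (TensorProduct.congr e (LinearEquiv.refl (ZMod 2) W)) (TensorProduct.map σ τ x)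
        = TensorProduct.map σ' τ ((TensorProduct.congr e (LinearEquiv.refl (ZMod 2) W)) x) := by
  have hc : (TensorProduct.congr e (LinearEquiv.refl (ZMod 2) W)).toLinearMap
        ∘ₗ TensorProduct.map σ τ
      = TensorProduct.map σ' τ
        ∘ₗ (TensorProduct.congr e (LinearEquiv.refl (ZMod 2) W)).toLinearMap := by
    apply TensorProduct.ext'
    intro v w
    simp [TensorProduct.congr_tmul, h v]
  intro x
  exact DFunLike.congr_fun hc x

lemma nat_prodMap (f : V →ₗ[ZMod 2] V) (g : Z →ₗ[ZMod 2] Z) (τ : W →ₗ[ZMod 2] W) :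
    ∀ x : (V × Z) ⊗[ZMod 2] W,
      (TensorProduct.prodLeft (ZMod 2) (ZMod 2) V Z W) (TensorProduct.map (f.prodMap g) τ x)
        = ((TensorProduct.map f τ).prodMap (TensorProduct.map g τ))
            ((TensorProduct.prodLeft (ZMod 2) (ZMod 2) V Z W) x) := by
  have hc : (TensorProduct.prodLeft (ZMod 2) (ZMod 2) V Z W).toLinearMap
        ∘ₗ TensorProduct.map (f.prodMap g) τ
      = ((TensorProduct.map f τ).prodMap (TensorProduct.map g τ))
        ∘ₗ (TensorProduct.prodLeft (ZMod 2) (ZMod 2) V Z W).toLinearMap := by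
    apply TensorProduct.ext'
    intro p w
    obtain ⟨v, z⟩ := p
    simp
  intro x
  exact DFunLike.congr_fun hc x

lemma nat_Kmap (θ : Z →ₗ[ZMod 2] Z) (τ : W →ₗ[ZMod 2] W) :
    ∀ x : (Z × Z) ⊗[ZMod 2] W,
      (TensorProduct.prodLeft (ZMod 2) (ZMod 2) Z Z W) (TensorProduct.map (Kmap θ) τ x)
        = Kmap (TensorProduct.map θ τ) ((TensorProduct.prodLeft (ZMod 2) (ZMod 2) Z Z W) x) := by
  have hc : (TensorProduct.prodLeft (ZMod 2) (ZMod 2) Z Z W).toLinearMap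
        ∘ₗ TensorProduct.map (Kmap θ) τ
      = Kmap (TensorProduct.map θ τ)
        ∘ₗ (TensorProduct.prodLeft (ZMod 2) (ZMod 2) Z Z W).toLinearMap := by
    apply TensorProduct.ext'
    intro p w
    obtain ⟨z₁, z₂⟩ := p
    simp [add_tmul]
  intro x
  exact DFunLike.congr_fun hc x

end Aux

/-- For linear involutions `σ`, `τ` of finite-dimensional `𝔽₂`-vector spaces `V`, `W`,
one has `t(σ ⊗ τ) = t(σ) · t(τ)`. -/
theorem trivCount_tensor
    (V W : Type) [AddCommGroup V] [Module (ZMod 2) V] [FiniteDimensional (ZMod 2) V]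
    [AddCommGroup W] [Module (ZMod 2) W] [FiniteDimensional (ZMod 2) W]
    (σ : V →ₗ[ZMod 2] V) (τ : W →ₗ[ZMod 2] W)
    (hσ : σ ∘ₗ σ = LinearMap.id) (hτ : τ ∘ₗ τ = LinearMap.id) :
    trivCount (TensorProduct.map σ τ) = trivCount σ * trivCount τ := by
  obtain ⟨T, C, e, he⟩ := exists_decomp σ hσ
  have hidT : (LinearMap.id : ↥T →ₗ[ZMod 2] ↥T) ∘ₗ LinearMap.id = LinearMap.id :=
    LinearMap.id_comp _
  have hidC : (LinearMap.id : ↥C →ₗ[ZMod 2] ↥C) ∘ₗ LinearMap.id = LinearMap.id :=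
    LinearMap.id_comp _
  have hKC : Kmap (LinearMap.id : ↥C →ₗ[ZMod 2] ↥C) ∘ₗ Kmap LinearMap.id = LinearMap.id :=
    Kmap_invol _ hidC
  -- trivCount σ = finrank T
  have h1 : trivCount σ = Module.finrank (ZMod 2) ↥T := by
    rw [trivCount_conj e σ _ he, trivCount_prodMap _ _ hidT hKC, trivCount_id',
      trivCount_Kmap _ hidC, add_zero]
  -- tensor side
  have hinv1 : TensorProduct.map (LinearMap.id : ↥T →ₗ[ZMod 2] ↥T) τ
      ∘ₗ TensorProduct.map LinearMap.id τ = LinearMap.id := by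
    rw [← TensorProduct.map_comp, hidT, hτ, TensorProduct.map_id]
  have hinv2 : TensorProduct.map (Kmap (LinearMap.id : ↥C →ₗ[ZMod 2] ↥C)) τ
      ∘ₗ TensorProduct.map (Kmap LinearMap.id) τ = LinearMap.id := by
    rw [← TensorProduct.map_comp, hKC, hτ, TensorProduct.map_id]
  have hθinv : (TensorProduct.map (LinearMap.id : ↥C →ₗ[ZMod 2] ↥C) τ)
      ∘ₗ TensorProduct.map LinearMap.id τ = LinearMap.id := by
    rw [← TensorProduct.map_comp, hidC, hτ, TensorProduct.map_id]
  have s1 : trivCount (TensorProduct.map σ τ)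
      = trivCount (TensorProduct.map
          ((LinearMap.id : ↥T →ₗ[ZMod 2] ↥T).prodMap
            (Kmap (LinearMap.id : ↥C →ₗ[ZMod 2] ↥C))) τ) :=
    trivCount_conj (TensorProduct.congr e (LinearEquiv.refl (ZMod 2) W)) _ _
      (nat_congr e σ _ τ he)
  have s2 : trivCount (TensorProduct.map
        ((LinearMap.id : ↥T →ₗ[ZMod 2] ↥T).prodMap
          (Kmap (LinearMap.id : ↥C →ₗ[ZMod 2] ↥C))) τ)
      = trivCount ((TensorProduct.map (LinearMap.id : ↥T →ₗ[ZMod 2] ↥T) τ).prodMap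
          (TensorProduct.map (Kmap (LinearMap.id : ↥C →ₗ[ZMod 2] ↥C)) τ)) :=
    trivCount_conj (TensorProduct.prodLeft (ZMod 2) (ZMod 2) ↥T (↥C × ↥C) W) _ _
      (nat_prodMap _ _ τ)
  have s3 : trivCount (TensorProduct.map (Kmap (LinearMap.id : ↥C →ₗ[ZMod 2] ↥C)) τ)
      = 0 := by
    rw [trivCount_conj (TensorProduct.prodLeft (ZMod 2) (ZMod 2) ↥C ↥C W) _ _
      (nat_Kmap LinearMap.id τ)]
    exact trivCount_Kmap _ hθinv
  have s4 : trivCount (TensorProduct.map (LinearMap.id : ↥T →ₗ[ZMod 2] ↥T) τ)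
      = Module.finrank (ZMod 2) ↥T * trivCount τ := by
    have hrfl : TensorProduct.map (LinearMap.id : ↥T →ₗ[ZMod 2] ↥T) τ
        = LinearMap.lTensor ↥T τ := rfl
    rw [hrfl, trivCount_lTensor τ hτ]
  rw [s1, s2, trivCount_prodMap _ _ hinv1 hinv2, s3, s4, add_zero, h1]

end
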